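/- Let G be a finite connected D-regular simple graph (D ≥ 1) and C ⊆ V a set of colluding agents no two of which are adjacent. Let G' be obtained from G by subdividing each edge e = (u,v) with u ∈ C by a new vertex w_e, and let C' = C ∪ {w_e : e an edge incident to C}, so G' has |V| + |C|D vertices, of which |C|D are new. Then for every integer m, there exists an admissible nonuniform broadcast γ for (G, C) with N(C,γ) ≥ m if and only if there exists an admissible (uniform) broadcast β for (G', C') with N(C',β) ≥ m + |C|D(|C|D − 1) + 2|C|D|V|. -/

import Mathlib

open SimpleGraph

namespace Intercept

variable {V : Type*}

/-- The perceived-distance vectors after `s` rounds of the synchronization protocol.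
Colluding agents (members of `C`) always broadcast `β`; honest agents start with
`0`/`∞` and update by the distance-vector rule. -/
noncomputable def perceived [Fintype V] [DecidableEq V] (G : SimpleGraph V)
    (C : Finset V) (β : V → V → ℕ∞) : ℕ → V → V → ℕ∞
  | 0 => fun i j => if i ∈ C then β i j else if i = j then 0 else ⊤
  | s + 1 => fun i j =>
      if i ∈ C then β i j
      else min (perceived G C β s i j)
        (1 + ⨅ k ∈ G.neighborSet i, perceived G C β s k j)

/-- The stationary perceived distances `ρ = ρ^n`. -/
noncomputable def rho [Fintype V] [DecidableEq V] (G : SimpleGraph V)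
    (C : Finset V) (β : V → V → ℕ∞) : V → V → ℕ∞ :=
  perceived G C β (Fintype.card V)

/-- `k ∈ b(i,t)`:  `k` is a neighbor of `i` minimizing the (stationary) perceived
distance `ρ(·,t)` among all neighbors of `i`; only defined (satisfiable) for `i ≠ t`. -/
def inForwardSet (G : SimpleGraph V) (ρ : V → V → ℕ∞) (i t k : V) : Prop :=
  i ≠ t ∧ G.Adj i k ∧ ∀ k', G.Adj i k' → ρ k t ≤ ρ k' t

/-- A corresponding path from `s` to `t`: a walk in `G` such that every honest vertex
forwards to a member of its forwarding set `b(·,t)`. -/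
def IsCorrPath [Fintype V] [DecidableEq V] (G : SimpleGraph V) (C : Finset V)
    (β : V → V → ℕ∞) (s t : V) (ℓ : ℕ) (v : ℕ → V) : Prop :=
  v 0 = s ∧ v ℓ = t ∧ (∀ i < ℓ, G.Adj (v i) (v (i + 1))) ∧
    ∀ i < ℓ, v i ∉ C → inForwardSet G (rho G C β) (v i) t (v (i + 1))

/-- A broadcast is admissible if between every ordered pair of distinct vertices
there is a corresponding path. -/
def Admissible [Fintype V] [DecidableEq V] (G : SimpleGraph V) (C : Finset V)
    (β : V → V → ℕ∞) : Prop :=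
  ∀ s t : V, s ≠ t → ∃ ℓ v, IsCorrPath G C β s t ℓ v

/-- The pair `(s,t)` is captured if every corresponding path from `s` to `t`
contains a colluding vertex. -/
def Captured [Fintype V] [DecidableEq V] (G : SimpleGraph V) (C : Finset V)
    (β : V → V → ℕ∞) (s t : V) : Prop :=
  ∀ ℓ v, IsCorrPath G C β s t ℓ v → ∃ i ≤ ℓ, v i ∈ C

/-- `N(C,β)`: the number of captured ordered pairs of distinct vertices. -/
noncomputable def numCaptured [Fintype V] [DecidableEq V] (G : SimpleGraph V)
    (C : Finset V) (β : V → V → ℕ∞) : ℕ :=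
  Set.ncard {p : V × V | p.1 ≠ p.2 ∧ Captured G C β p.1 p.2}


/-! ### The nonuniform broadcast model -/

/-- Perceived distances of honest agents in the nonuniform model: the update for an
honest agent `i` uses, for each colluding neighbor `k`, the value `γ k i j` that `k`
broadcasts specifically to `i`. -/
noncomputable def perceivedNU [Fintype V] [DecidableEq V] (G : SimpleGraph V)
    (C : Finset V) (γ : V → V → V → ℕ∞) : ℕ → V → V → ℕ∞
  | 0 => fun i j => if i = j then 0 else ⊤
  | s + 1 => fun i j =>
      min (perceivedNU G C γ s i j)
        (1 + ⨅ k ∈ G.neighborSet i,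
          (if k ∈ C then γ k i j else perceivedNU G C γ s k j))

/-- Stationary perceived distances in the nonuniform model. -/
noncomputable def rhoNU [Fintype V] [DecidableEq V] (G : SimpleGraph V)
    (C : Finset V) (γ : V → V → V → ℕ∞) : V → V → ℕ∞ :=
  perceivedNU G C γ (Fintype.card V)

/-- `k ∈ b(i,t)` in the nonuniform model: `k` is a neighbor of honest `i` minimizing
the value broadcast to `i` (which is `γ k i t` for colluding `k`, and the stationary
perceived distance for honest `k`). -/
def inForwardSetNU [Fintype V] [DecidableEq V] (G : SimpleGraph V) (C : Finset V)
    (γ : V → V → V → ℕ∞) (i t k : V) : Prop :=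
  i ≠ t ∧ G.Adj i k ∧ ∀ k', G.Adj i k' →
    (if k ∈ C then γ k i t else rhoNU G C γ k t) ≤
      (if k' ∈ C then γ k' i t else rhoNU G C γ k' t)

/-- Corresponding paths in the nonuniform model. -/
def IsCorrPathNU [Fintype V] [DecidableEq V] (G : SimpleGraph V) (C : Finset V)
    (γ : V → V → V → ℕ∞) (s t : V) (ℓ : ℕ) (v : ℕ → V) : Prop :=
  v 0 = s ∧ v ℓ = t ∧ (∀ i < ℓ, G.Adj (v i) (v (i + 1))) ∧
    ∀ i < ℓ, v i ∉ C → inForwardSetNU G C γ (v i) t (v (i + 1))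

/-- Admissibility in the nonuniform model. -/
def AdmissibleNU [Fintype V] [DecidableEq V] (G : SimpleGraph V) (C : Finset V)
    (γ : V → V → V → ℕ∞) : Prop :=
  ∀ s t : V, s ≠ t → ∃ ℓ v, IsCorrPathNU G C γ s t ℓ v

/-- Capture in the nonuniform model. -/
def CapturedNU [Fintype V] [DecidableEq V] (G : SimpleGraph V) (C : Finset V)
    (γ : V → V → V → ℕ∞) (s t : V) : Prop :=
  ∀ ℓ v, IsCorrPathNU G C γ s t ℓ v → ∃ i ≤ ℓ, v i ∈ C

/-- `N(C,γ)` in the nonuniform model. -/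
noncomputable def numCapturedNU [Fintype V] [DecidableEq V] (G : SimpleGraph V)
    (C : Finset V) (γ : V → V → V → ℕ∞) : ℕ :=
  Set.ncard {p : V × V | p.1 ≠ p.2 ∧ CapturedNU G C γ p.1 p.2}

/-! ### The subdivided graph `G'` -/

/-- The vertex type of the subdivided graph `G'`: the old vertices together with one
new vertex for each edge `(c,u)` of `G` with `c ∈ C` (since `C` is an independent
set, each edge incident to `C` has exactly one endpoint in `C`). -/
abbrev SubdivVert [DecidableEq V] (G : SimpleGraph V) [DecidableRel G.Adj]
    (C : Finset V) : Type _ :=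
  V ⊕ {p : V × V // p.1 ∈ C ∧ G.Adj p.1 p.2}

/-- The subdivided graph `G'`, obtained from `G` by subdividing each edge incident to
`C` with a new vertex. -/
def subdivGraph [DecidableEq V] (G : SimpleGraph V) [DecidableRel G.Adj]
    (C : Finset V) : SimpleGraph (SubdivVert G C) where
  Adj a b :=
    match a, b with
    | Sum.inl u, Sum.inl w => G.Adj u w ∧ u ∉ C ∧ w ∉ C
    | Sum.inl u, Sum.inr e => u = e.1.1 ∨ u = e.1.2
    | Sum.inr e, Sum.inl u => u = e.1.1 ∨ u = e.1.2
    | Sum.inr _, Sum.inr _ => False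
  symm := by
    constructor
    rintro (u | e) (w | f) h
    · exact ⟨h.1.symm, h.2.2, h.2.1⟩
    · exact h
    · exact h
    · exact h.elim
  loopless := by
    constructor
    rintro (u | e) h
    · exact G.irrefl h.1
    · exact h

/-- The colluding set `C'` in the subdivided graph: the old colluders together with
all the new subdivision vertices. -/
def subdivColluders [Fintype V] [DecidableEq V] (G : SimpleGraph V)
    [DecidableRel G.Adj] (C : Finset V) : Finset (SubdivVert G C) :=
  C.map ⟨Sum.inl, Sum.inl_injective⟩ ∪ Finset.univ.map ⟨Sum.inr, Sum.inr_injective⟩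


set_option linter.unusedSectionVars false
set_option maxHeartbeats 1000000

section Aux1
variable [Fintype V] [DecidableEq V] {G : SimpleGraph V} {C : Finset V}
  {γ : V → V → V → ℕ∞} {β : V → V → ℕ∞}

lemma iInf_attained {α : Type*} [Finite α] (S : Set α) (f : α → ℕ∞) (hne : S.Nonempty) :
    ∃ a ∈ S, (⨅ x ∈ S, f x) = f a := by
  obtain ⟨a, ha, hmin⟩ := Set.exists_min_image S f (Set.toFinite S) hne
  exact ⟨a, ha, le_antisymm (iInf₂_le a ha) (le_iInf₂ fun b hb => hmin b hb)⟩

lemma pNU_succ_le (s : ℕ) (i j : V) :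
    perceivedNU G C γ (s+1) i j ≤ perceivedNU G C γ s i j := min_le_left _ _

lemma pNU_anti {s s' : ℕ} (h : s ≤ s') (i j : V) :
    perceivedNU G C γ s' i j ≤ perceivedNU G C γ s i j := by
  induction s' with
  | zero => simp_all
  | succ n ih =>
    rcases Nat.lt_or_ge s (n+1) with h' | h'
    · exact (pNU_succ_le n i j).trans (ih (Nat.lt_succ_iff.mp h'))
    · have : s = n + 1 := le_antisymm h h'
      subst this; rfl

/-- Walks whose interior vertices are honest. -/
def IsNUWalk (G : SimpleGraph V) (C : Finset V) (r : ℕ) (u : ℕ → V) : Prop :=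
  (∀ m < r, G.Adj (u m) (u (m+1))) ∧ ∀ m, 0 < m → m < r → u m ∉ C

/-- The value of such a walk towards target `j`. -/
noncomputable def wval (C : Finset V) (γ : V → V → V → ℕ∞) (j : V) (r : ℕ) (u : ℕ → V) : ℕ∞ :=
  (r : ℕ∞) + (if 0 < r ∧ u r ∈ C then γ (u r) (u (r-1)) j else (if u r = j then 0 else ⊤))

def consF (a : V) (v : ℕ → V) : ℕ → V := fun n => Nat.casesOn n a v

@[simp] lemma consF_zero (a : V) (v : ℕ → V) : consF a v 0 = a := rfl
@[simp] lemma consF_succ (a : V) (v : ℕ → V) (n : ℕ) : consF a v (n+1) = v n := rfl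

lemma wval_cons {j : V} {r : ℕ} {u : ℕ → V} (a : V) (h : 0 < r ∨ u 0 ∉ C) :
    wval C γ j (r+1) (consF a u) = 1 + wval C γ j r u := by
  unfold wval
  have h1 : consF a u (r+1) = u r := rfl
  rcases Nat.eq_zero_or_pos r with rfl | hr
  · rcases h with h | h
    · omega
    · simp [consF, h]; congr
  · have h2 : (r+1) - 1 = (r-1) + 1 := by omega
    rw [h1, h2]
    simp only [consF_succ]
    by_cases hC : u r ∈ C
    · rw [if_pos ⟨by omega, hC⟩, if_pos ⟨hr, hC⟩]
      push_cast; ring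
    · have hneg : ¬(0 < r + 1 ∧ u r ∈ C) := fun hh => hC hh.2
      have hneg' : ¬(0 < r ∧ u r ∈ C) := fun hh => hC hh.2
      rw [if_neg hneg, if_neg hneg']
      push_cast; ring

lemma isNUWalk_cons {r : ℕ} {u : ℕ → V} {a : V} (hw : IsNUWalk G C r u)
    (ha : G.Adj a (u 0)) (h0 : u 0 ∉ C) : IsNUWalk G C (r+1) (consF a u) := by
  constructor
  · intro m hm
    cases m with
    | zero => exact ha
    | succ n => exact hw.1 n (by omega)
  · intro m hm hm' 
    cases m with
    | zero => omega
    | succ n =>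
      cases n with
      | zero => exact h0
      | succ p => exact hw.2 (p+1) (by omega) (by omega)

lemma isNUWalk_shift {r : ℕ} {u : ℕ → V} (hw : IsNUWalk G C (r+1) u) :
    IsNUWalk G C r (fun n => u (n+1)) := by
  refine ⟨fun m hm => hw.1 (m+1) (by omega), fun m h0 hm => hw.2 (m+1) (by omega) (by omega)⟩

lemma pNU_le_wval : ∀ (r s : ℕ) (u : ℕ → V) (j : V), IsNUWalk G C r u → r ≤ s →
    perceivedNU G C γ s (u 0) j ≤ wval C γ j r u := by
  intro r
  induction r with
  | zero =>
    intro s u j _ _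
    refine (pNU_anti (Nat.zero_le s) (u 0) j).trans ?_
    unfold wval
    simp [perceivedNU]
  | succ r ih =>
    intro s u j hw hrs
    obtain ⟨s', rfl⟩ : ∃ s', s = s' + 1 := ⟨s - 1, by omega⟩
    have hadj : G.Adj (u 0) (u 1) := hw.1 0 (by omega)
    have hmem : u 1 ∈ G.neighborSet (u 0) := hadj
    have hmin : perceivedNU G C γ (s'+1) (u 0) j ≤
        1 + (if u 1 ∈ C then γ (u 1) (u 0) j else perceivedNU G C γ s' (u 1) j) := by
      refine (min_le_right _ _).trans ?_
      exact add_le_add_right (iInf₂_le (u 1) hmem) 1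
    by_cases hC : u 1 ∈ C
    · -- then r = 0
      have hr0 : r = 0 := by
        by_contra h
        exact (hw.2 1 (by omega) (by omega)) hC
      subst hr0
      rw [if_pos hC] at hmin
      refine hmin.trans ?_
      unfold wval
      simp [hC]
    · rw [if_neg hC] at hmin
      have hsh := isNUWalk_shift hw
      have := ih s' (fun n => u (n+1)) j hsh (by omega)
      have hcons : u = consF (u 0) (fun n => u (n+1)) := by
        funext n; cases n <;> rfl
      rw [hcons, wval_cons (u 0) (Or.inr hC)]
      refine hmin.trans ?_
      exact add_le_add_right this 1

lemma pNU_card_le_wval : ∀ (r : ℕ) (u : ℕ → V) (j : V), IsNUWalk G C r u →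
    perceivedNU G C γ (Fintype.card V) (u 0) j ≤ wval C γ j r u := by
  intro r
  induction r using Nat.strong_induction_on with
  | _ r ih =>
    intro u j hw
    rcases le_or_gt r (Fintype.card V) with hle | hlt
    · exact pNU_le_wval r (Fintype.card V) u j hw hle
    · -- pigeonhole
      have : Fintype.card V < Fintype.card (Fin r) := by simpa using hlt
      obtain ⟨p', q', hne, heq⟩ := Fintype.exists_ne_map_eq_of_card_lt
        (fun m : Fin r => u m) this
      -- wlog p < q
      obtain ⟨p, q, hpq, hequ⟩ : ∃ p q : ℕ, p < q ∧ q < r ∧ u p = u q := by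
        rcases lt_or_gt_of_ne (Fin.val_ne_of_ne hne) with h | h
        · exact ⟨p', q', h, q'.isLt, heq⟩
        · exact ⟨q', p', h, p'.isLt, heq.symm⟩
      obtain ⟨hqr, hequ⟩ := hequ
      set d := q - p with hd
      have hd1 : 1 ≤ d := by omega
      set r' := r - d with hr'
      set u' : ℕ → V := fun n => if n ≤ p then u n else u (n + d) with hu'
      have hsh : ∀ n, p ≤ n → u' n = u (n + d) := by
        intro n hn
        rcases eq_or_lt_of_le hn with rfl | h
        · simp only [hu', if_pos le_rfl]
          rw [hequ]; congr 1; omega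
        · exact if_neg (by omega)
      have hr'p : p < r' := by omega
      have hur' : u' r' = u r := by rw [hsh r' (by omega)]; congr 1; omega
      have hur'1 : u' (r' - 1) = u (r - 1) := by rw [hsh (r'-1) (by omega)]; congr 1; omega
      have hw' : IsNUWalk G C r' u' := by
        constructor
        · intro m hm
          rcases Nat.lt_or_ge m p with h | h
          · have e1 : u' m = u m := by simp only [hu', if_pos (by omega : m ≤ p)]
            have e2 : u' (m+1) = u (m+1) := by simp only [hu', if_pos (by omega : m+1 ≤ p)]
            rw [e1, e2]; exact hw.1 m (by omega)
          · have e1 : u' m = u (m + d) := hsh m h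
            have e2 : u' (m+1) = u (m+1+d) := hsh (m+1) (by omega)
            rw [e1, e2, show m+1+d = (m+d)+1 by ring]
            exact hw.1 (m+d) (by omega)
        · intro m h0 hm
          rcases le_or_gt m p with h | h
          · have e1 : u' m = u m := by simp only [hu', if_pos h]
            rw [e1]; exact hw.2 m h0 (by omega)
          · rw [hsh m (by omega)]
            exact hw.2 (m+d) (by omega) (by omega)
      have hval : wval C γ j r' u' ≤ wval C γ j r u := by
        unfold wval
        rw [hur', hur'1]
        have hcast : (r' : ℕ∞) ≤ (r : ℕ∞) := by exact_mod_cast Nat.sub_le r d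
        by_cases hC : u r ∈ C
        · rw [if_pos ⟨by omega, hC⟩, if_pos ⟨by omega, hC⟩]
          exact add_le_add_left hcast _
        · have hneg : ¬(0 < r' ∧ u r ∈ C) := fun hh => hC hh.2
          have hneg' : ¬(0 < r ∧ u r ∈ C) := fun hh => hC hh.2
          rw [if_neg hneg, if_neg hneg']
          exact add_le_add_left hcast _
      have hu0 : u' 0 = u 0 := by simp only [hu', if_pos (Nat.zero_le p)]
      have := ih r' (by omega) u' j hw'
      rw [hu0] at this
      exact this.trans hval

lemma exists_walk_le : ∀ (s : ℕ) (i j : V), ∃ r u, IsNUWalk G C r u ∧ u 0 = i ∧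
    wval C γ j r u ≤ perceivedNU G C γ s i j := by
  intro s
  induction s with
  | zero =>
    intro i j
    refine ⟨0, fun _ => i, ⟨fun m hm => by omega, fun m h0 hm => by omega⟩, rfl, ?_⟩
    unfold wval
    simp [perceivedNU]
  | succ s ih =>
    intro i j
    rcases le_or_gt (perceivedNU G C γ s i j)
      (1 + ⨅ k ∈ G.neighborSet i, (if k ∈ C then γ k i j else perceivedNU G C γ s k j)) with h | h
    · obtain ⟨r, u, hw, hu0, hv⟩ := ih i j
      refine ⟨r, u, hw, hu0, hv.trans ?_⟩
      have hsucc : perceivedNU G C γ (s+1) i j = min (perceivedNU G C γ s i j)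
        (1 + ⨅ k ∈ G.neighborSet i, (if k ∈ C then γ k i j else perceivedNU G C γ s k j)) := rfl
      rw [hsucc, min_eq_left h]
    · have hmin : perceivedNU G C γ (s+1) i j =
        1 + ⨅ k ∈ G.neighborSet i, (if k ∈ C then γ k i j else perceivedNU G C γ s k j) := by
        have hsucc : perceivedNU G C γ (s+1) i j = min (perceivedNU G C γ s i j)
          (1 + ⨅ k ∈ G.neighborSet i, (if k ∈ C then γ k i j else perceivedNU G C γ s k j)) := rfl
        rw [hsucc, min_eq_right h.le]
      rcases Set.eq_empty_or_nonempty (G.neighborSet i) with hemp | hne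
      · rw [hemp] at hmin
        simp only [Set.mem_empty_iff_false, iInf_false, iInf_top] at hmin
        obtain ⟨r, u, hw, hu0, hv⟩ := ih i j
        refine ⟨r, u, hw, hu0, ?_⟩
        rw [hmin]
        simp
      · obtain ⟨k0, hk0, hinf⟩ := iInf_attained (G.neighborSet i)
          (fun k => if k ∈ C then γ k i j else perceivedNU G C γ s k j) hne
        rw [hinf] at hmin
        by_cases hC : k0 ∈ C
        · refine ⟨1, consF i (fun _ => k0), ?_, rfl, ?_⟩
          · exact ⟨fun m hm => by interval_cases m; exact hk0, fun m h0 hm => by omega⟩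
          · unfold wval
            simp only [consF_succ]
            simp only [hC, show (0:ℕ) < 1 from by omega, and_self, ↓reduceIte]
            rw [hmin, if_pos hC]
            simp
        · obtain ⟨r, u, hw, hu0, hv⟩ := ih k0 j
          refine ⟨r+1, consF i u, isNUWalk_cons hw (by rw [hu0]; exact hk0) (by rw [hu0]; exact hC), rfl, ?_⟩
          rw [wval_cons i (Or.inr (by rw [hu0]; exact hC)), hmin, if_neg hC]
          exact add_le_add_right hv 1

lemma pNU_stab {s : ℕ} (h : Fintype.card V ≤ s) (i j : V) :
    perceivedNU G C γ s i j = perceivedNU G C γ (Fintype.card V) i j := by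
  refine le_antisymm (pNU_anti h i j) ?_
  obtain ⟨r, u, hw, hu0, hv⟩ := exists_walk_le (G := G) (C := C) (γ := γ) s i j
  exact (hu0 ▸ pNU_card_le_wval r u j hw).trans hv

lemma pNU_succ (s : ℕ) (i j : V) : perceivedNU G C γ (s+1) i j =
    min (perceivedNU G C γ s i j)
      (1 + ⨅ k ∈ G.neighborSet i, (if k ∈ C then γ k i j else perceivedNU G C γ s k j)) := rfl


section Conv

lemma perceived_colluder {c : V} (hc : c ∈ C) (s : ℕ) (j : V) :
    perceived G C β s c j = β c j := by
  cases s <;> simp [perceived, hc]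

lemma perceived_eq_NU {i : V} (hi : i ∉ C) (s : ℕ) (j : V) :
    perceived G C β s i j = perceivedNU G C (fun k _ j => β k j) s i j := by
  induction s generalizing i with
  | zero => simp [perceived, perceivedNU, hi]
  | succ s ih =>
    have e1 : perceived G C β (s+1) i j = min (perceived G C β s i j)
        (1 + ⨅ k ∈ G.neighborSet i, perceived G C β s k j) := by
      show (if i ∈ C then _ else _) = _
      rw [if_neg hi]
    rw [e1, pNU_succ, ih hi]
    congr 1
    congr 1
    refine le_antisymm (le_iInf₂ fun k hk => ?_) (le_iInf₂ fun k hk => ?_)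
    · refine (iInf₂_le k hk).trans ?_
      by_cases hkC : k ∈ C
      · rw [perceived_colluder hkC, if_pos hkC]
      · rw [ih hkC, if_neg hkC]
    · refine (iInf₂_le k hk).trans ?_
      by_cases hkC : k ∈ C
      · rw [perceived_colluder hkC, if_pos hkC]
      · rw [ih hkC, if_neg hkC]

lemma rho_val (x j : V) : rho G C β x j =
    (if x ∈ C then β x j else rhoNU G C (fun k _ j => β k j) x j) := by
  by_cases hx : x ∈ C
  · rw [if_pos hx]; exact perceived_colluder hx _ j
  · rw [if_neg hx]; exact perceived_eq_NU hx _ j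

lemma inForwardSet_iff_NU {i t k : V} :
    inForwardSet G (rho G C β) i t k ↔ inForwardSetNU G C (fun k _ j => β k j) i t k := by
  unfold inForwardSet inForwardSetNU
  refine and_congr Iff.rfl (and_congr Iff.rfl (forall_congr' fun k' => imp_congr Iff.rfl ?_))
  rw [rho_val k t, rho_val k' t]

lemma isCorrPath_iff_NU {s t : V} {ℓ : ℕ} {v : ℕ → V} :
    IsCorrPath G C β s t ℓ v ↔ IsCorrPathNU G C (fun k _ j => β k j) s t ℓ v := by
  unfold IsCorrPath IsCorrPathNU
  refine and_congr Iff.rfl (and_congr Iff.rfl (and_congr Iff.rfl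
    (forall_congr' fun i => imp_congr Iff.rfl (imp_congr Iff.rfl ?_))))
  exact inForwardSet_iff_NU

end Conv

section Truthful


lemma corrPathNU_cons {a b t : V} {ℓ : ℕ} {v : ℕ → V}
    (h : IsCorrPathNU G C γ b t ℓ v) (hadj : G.Adj a b)
    (hfwd : a ∉ C → inForwardSetNU G C γ a t b) :
    IsCorrPathNU G C γ a t (ℓ+1) (consF a v) := by
  obtain ⟨h0, hl, hadj', hfwd'⟩ := h
  refine ⟨rfl, by simpa using hl, fun i hi => ?_, fun i hi hC => ?_⟩
  · cases i with
    | zero => simpa [h0] using hadj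
    | succ n => simpa using hadj' n (by omega)
  · cases i with
    | zero => simpa [h0] using hfwd (by simpa using hC)
    | succ n => simpa using hfwd' n (by omega) (by simpa using hC)

lemma edist_lt_card {i t : V} (hr : G.Reachable i t) :
    G.edist i t < (Fintype.card V : ℕ∞) := by
  obtain ⟨p, hp⟩ := hr.exists_walk_length_eq_edist
  calc G.edist i t ≤ p.bypass.length := edist_le _
    _ < (Fintype.card V : ℕ∞) := by exact_mod_cast p.bypass_isPath.length_lt

lemma exists_adj_edist_succ {i t : V} (hne : i ≠ t) (hr : G.Reachable i t) :
    ∃ k, G.Adj i k ∧ G.edist k t + 1 = G.edist i t := by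
  obtain ⟨p, hp⟩ := hr.exists_walk_length_eq_edist
  cases p with
  | nil => exact absurd rfl hne
  | @cons _ k _ h q =>
    refine ⟨k, h, le_antisymm ?_ ?_⟩
    · have h1 : G.edist k t ≤ q.length := edist_le q
      rw [← hp]
      have : (q.cons h).length = q.length + 1 := rfl
      rw [this]
      push_cast
      exact add_le_add_left h1 1
    · calc G.edist i t ≤ G.edist i k + G.edist k t := G.edist_triangle
        _ = G.edist k t + 1 := by rw [edist_eq_one_iff_adj.mpr h, add_comm]

variable {t : V}

lemma edist_le_pNU (Htruth : ∀ c ∈ C, ∀ u, G.Adj c u → γ c u t = G.edist c t) :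
    ∀ (s : ℕ) (i : V), i ∉ C → G.edist i t ≤ perceivedNU G C γ s i t := by
  intro s
  induction s with
  | zero =>
    intro i hi
    by_cases h : i = t
    · subst h; simp [perceivedNU, edist_self]
    · simp [perceivedNU, h]
  | succ s ih =>
    intro i hi
    rw [pNU_succ]
    refine le_min (ih i hi) ?_
    rcases Set.eq_empty_or_nonempty (G.neighborSet i) with hemp | hne
    · rw [hemp]; simp
    · obtain ⟨k0, hk0, hinf⟩ := iInf_attained (G.neighborSet i)
        (fun k => if k ∈ C then γ k i t else perceivedNU G C γ s k t) hne
      rw [hinf]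
      have hadj : G.Adj i k0 := hk0
      have hbound : G.edist k0 t ≤ (if k0 ∈ C then γ k0 i t else perceivedNU G C γ s k0 t) := by
        by_cases hkC : k0 ∈ C
        · rw [if_pos hkC, Htruth k0 hkC i hadj.symm]
        · rw [if_neg hkC]; exact ih k0 hkC
      calc G.edist i t ≤ G.edist i k0 + G.edist k0 t := G.edist_triangle
        _ = 1 + G.edist k0 t := by rw [edist_eq_one_iff_adj.mpr hadj]
        _ ≤ _ := add_le_add_right hbound 1

lemma pNU_le_edist (Htruth : ∀ c ∈ C, ∀ u, G.Adj c u → γ c u t = G.edist c t) :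
    ∀ (s : ℕ) (i : V), i ∉ C → G.edist i t ≤ (s : ℕ∞) →
      perceivedNU G C γ s i t ≤ G.edist i t := by
  intro s
  induction s with
  | zero =>
    intro i hi h
    have h0 : G.edist i t = 0 := le_antisymm (by exact_mod_cast h) zero_le
    have : i = t := edist_eq_zero_iff.mp h0
    subst this
    simp [perceivedNU, SimpleGraph.edist_self]
  | succ s ih =>
    intro i hi h
    by_cases hit : i = t
    · subst hit
      refine le_trans (pNU_anti (Nat.zero_le _) _ _) ?_
      simp [perceivedNU, SimpleGraph.edist_self]
    · have hr : G.Reachable i t := by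
        refine reachable_of_edist_ne_top (fun htop => ?_)
        rw [htop] at h
        exact (lt_irrefl _ (lt_of_le_of_lt h (by exact_mod_cast ENat.coe_lt_top _ : ((s+1 : ℕ) : ℕ∞) < ⊤))).elim
      obtain ⟨k, hadj, hk⟩ := exists_adj_edist_succ hit hr
      have hkle : G.edist k t ≤ (s : ℕ∞) := by
        have h1 : G.edist k t + 1 ≤ (s : ℕ∞) + 1 := by
          rw [hk]; push_cast at h ⊢; exact h
        exact (WithTop.add_le_add_iff_right (by simp : (1:ℕ∞) ≠ ⊤)).mp h1
      have hcontrib : (if k ∈ C then γ k i t else perceivedNU G C γ s k t) ≤ G.edist k t := by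
        by_cases hkC : k ∈ C
        · rw [if_pos hkC, Htruth k hkC i hadj.symm]
        · rw [if_neg hkC]; exact ih k hkC hkle
      rw [pNU_succ]
      refine (min_le_right _ _).trans ?_
      refine le_trans (add_le_add_right (iInf₂_le k hadj) 1) ?_
      calc 1 + (if k ∈ C then γ k i t else perceivedNU G C γ s k t)
          ≤ 1 + G.edist k t := add_le_add_right hcontrib 1
        _ = G.edist i t := by rw [← hk, add_comm]

lemma truthful_route (Htruth : ∀ c ∈ C, ∀ u, G.Adj c u → γ c u t = G.edist c t)
    (hconn : G.Connected) :
    ∀ (n : ℕ) (i : V), i ≠ t → G.edist i t = (n : ℕ∞) →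
      ∃ ℓ v, IsCorrPathNU G C γ i t ℓ v := by
  intro n
  induction n using Nat.strong_induction_on with
  | _ n ihn =>
    intro i hit hdist
    cases n with
    | zero =>
      have h0 : G.edist i t = 0 := by exact_mod_cast hdist
      exact absurd (edist_eq_zero_iff.mp h0) hit
    | succ n =>
      obtain ⟨k, hadj, hk⟩ := exists_adj_edist_succ hit (hconn i t)
      have hkn : G.edist k t = (n : ℕ∞) := by
        rw [hdist] at hk
        have : G.edist k t + 1 = (n : ℕ∞) + 1 := by rw [hk]; push_cast; ring
        exact WithTop.add_right_cancel (by simp : (1:ℕ∞) ≠ ⊤) this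
      -- choose next hop
      have hnext : ∃ k1, G.Adj i k1 ∧ G.edist k1 t ≤ (n : ℕ∞) ∧
          (i ∉ C → inForwardSetNU G C γ i t k1) := by
        by_cases hiC : i ∈ C
        · exact ⟨k, hadj, le_of_eq hkn, fun h => absurd hiC h⟩
        · obtain ⟨k1, hk1, hmin⟩ := Set.exists_min_image (G.neighborSet i)
            (fun x => if x ∈ C then γ x i t else rhoNU G C γ x t) (Set.toFinite _) ⟨k, hadj⟩
          have hadj1 : G.Adj i k1 := hk1
          refine ⟨k1, hadj1, ?_, fun _ => ⟨hit, hadj1, fun k' hk' => hmin k' hk'⟩⟩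
          have h1 : G.edist k1 t ≤ (if k1 ∈ C then γ k1 i t else rhoNU G C γ k1 t) := by
            by_cases hkC : k1 ∈ C
            · rw [if_pos hkC, Htruth k1 hkC i hadj1.symm]
            · rw [if_neg hkC]; exact edist_le_pNU Htruth _ k1 hkC
          have h2 : (if k ∈ C then γ k i t else rhoNU G C γ k t) ≤ G.edist k t := by
            by_cases hkC : k ∈ C
            · rw [if_pos hkC, Htruth k hkC i hadj.symm]
            · rw [if_neg hkC]
              refine pNU_le_edist Htruth _ k hkC ?_
              rw [hkn]
              exact_mod_cast le_of_lt (by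
                have := edist_lt_card (hconn k t)
                rw [hkn] at this
                exact_mod_cast this)
          exact h1.trans ((hmin k hadj).trans (h2.trans_eq hkn))
      obtain ⟨k1, hadj1, hk1n, hfwd1⟩ := hnext
      by_cases hk1t : k1 = t
      · subst hk1t
        refine ⟨1, consF i (fun _ => k1), rfl, rfl, ?_, ?_⟩
        · intro m hm; interval_cases m; simpa using hadj1
        · intro m hm hC; interval_cases m; simpa using hfwd1 (by simpa using hC)
      · obtain ⟨n', hn'⟩ : ∃ n' : ℕ, G.edist k1 t = (n' : ℕ∞) := by
          have hlt : G.edist k1 t < ⊤ := lt_of_le_of_lt hk1n (ENat.coe_lt_top n)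
          exact ⟨(G.edist k1 t).toNat, (ENat.coe_toNat hlt.ne).symm⟩
        have hn'le : n' ≤ n := by
          rw [hn'] at hk1n; exact_mod_cast hk1n
        obtain ⟨ℓ, v, hpath⟩ := ihn n' (by omega) k1 hk1t hn'
        exact ⟨ℓ+1, consF i v, corrPathNU_cons hpath hadj1 hfwd1⟩

end Truthful

end Aux1

section Aux2
variable [Fintype V] [DecidableEq V] {G : SimpleGraph V} [DecidableRel G.Adj] {C : Finset V}
  {γ : V → V → V → ℕ∞}

lemma mem_C'_inl {x : V} : (Sum.inl x : SubdivVert G C) ∈ subdivColluders G C ↔ x ∈ C := by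
  simp [subdivColluders]

lemma mem_C'_inr (e : {p : V × V // p.1 ∈ C ∧ G.Adj p.1 p.2}) :
    (Sum.inr e : SubdivVert G C) ∈ subdivColluders G C := by
  simp [subdivColluders]

lemma adj_inl_inl {u w : V} : (subdivGraph G C).Adj (Sum.inl u) (Sum.inl w) ↔
    G.Adj u w ∧ u ∉ C ∧ w ∉ C := Iff.rfl

lemma adj_inl_inr {u : V} {e : {p : V × V // p.1 ∈ C ∧ G.Adj p.1 p.2}} :
    (subdivGraph G C).Adj (Sum.inl u) (Sum.inr e) ↔ u = e.1.1 ∨ u = e.1.2 := Iff.rfl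

lemma adj_inr_inl {u : V} {e : {p : V × V // p.1 ∈ C ∧ G.Adj p.1 p.2}} :
    (subdivGraph G C).Adj (Sum.inr e) (Sum.inl u) ↔ u = e.1.1 ∨ u = e.1.2 := Iff.rfl

lemma not_adj_inr_inr {e f : {p : V × V // p.1 ∈ C ∧ G.Adj p.1 p.2}} :
    ¬ (subdivGraph G C).Adj (Sum.inr e) (Sum.inr f) := fun h => h

lemma subdiv_connected (hsep : ∀ x ∈ C, ∀ y ∈ C, ¬ G.Adj x y) (hconn : G.Connected) :
    (subdivGraph G C).Connected := by
  have hne : Nonempty V := hconn.nonempty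
  rw [connected_iff]
  have step : ∀ u x : V, G.Adj u x →
      (subdivGraph G C).Reachable (Sum.inl u) (Sum.inl x) := by
    intro u x h
    by_cases hu : u ∈ C
    · have hx : x ∉ C := fun hx => hsep u hu x hx h
      have h1 : (subdivGraph G C).Adj (Sum.inl u) (Sum.inr ⟨(u, x), ⟨hu, h⟩⟩) := Or.inl rfl
      have h2 : (subdivGraph G C).Adj (Sum.inr (⟨(u, x), ⟨hu, h⟩⟩ :
          {p : V × V // p.1 ∈ C ∧ G.Adj p.1 p.2})) (Sum.inl x) := Or.inr rfl
      exact h1.reachable.trans h2.reachable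
    · by_cases hx : x ∈ C
      · have h1 : (subdivGraph G C).Adj (Sum.inl u) (Sum.inr ⟨(x, u), ⟨hx, h.symm⟩⟩) :=
          Or.inr rfl
        have h2 : (subdivGraph G C).Adj (Sum.inr (⟨(x, u), ⟨hx, h.symm⟩⟩ :
            {p : V × V // p.1 ∈ C ∧ G.Adj p.1 p.2})) (Sum.inl x) := Or.inl rfl
        exact h1.reachable.trans h2.reachable
      · exact (Adj.reachable (⟨h, hu, hx⟩ : (subdivGraph G C).Adj (Sum.inl u) (Sum.inl x)))
  have key : ∀ u w : V, (subdivGraph G C).Reachable (Sum.inl u) (Sum.inl w) := by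
    intro u w
    obtain ⟨p⟩ := hconn u w
    induction p with
    | nil => exact Reachable.refl _
    | cons h p ih => exact (step _ _ h).trans ih
  refine ⟨?_, ⟨Sum.inl hne.some⟩⟩
  rintro (u | e) (w | f)
  · exact key u w
  · exact (key u f.1.1).trans (Adj.reachable (Or.inl rfl : (subdivGraph G C).Adj
      (Sum.inl f.1.1) (Sum.inr f)))
  · exact (Adj.reachable (Or.inl rfl : (subdivGraph G C).Adj (Sum.inr e)
      (Sum.inl e.1.1))).trans (key e.1.1 w)
  · exact ((Adj.reachable (Or.inl rfl : (subdivGraph G C).Adj (Sum.inr e)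
      (Sum.inl e.1.1))).trans (key e.1.1 f.1.1)).trans
      (Adj.reachable (Or.inl rfl : (subdivGraph G C).Adj (Sum.inl f.1.1) (Sum.inr f)))

lemma adj_inl_honest {u : V} (hu : u ∉ C) (x : SubdivVert G C) :
    (subdivGraph G C).Adj (Sum.inl u) x ↔
      (∃ w, x = Sum.inl w ∧ G.Adj u w ∧ w ∉ C) ∨
      (∃ (c : V) (h : c ∈ C ∧ G.Adj c u), x = Sum.inr ⟨(c, u), h⟩) := by
  cases x with
  | inl w =>
    rw [adj_inl_inl]
    constructor
    · rintro ⟨h1, _, h3⟩; exact Or.inl ⟨w, rfl, h1, h3⟩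
    · rintro (⟨w', hw', h1, h3⟩ | ⟨c, h, hx⟩)
      · cases hw'; exact ⟨h1, hu, h3⟩
      · exact absurd hx (by simp)
  | inr e =>
    obtain ⟨⟨c, w⟩, hcw⟩ := e
    rw [adj_inl_inr]
    constructor
    · rintro (h | h)
      · exact absurd (h ▸ hcw.1) hu
      · subst h; exact Or.inr ⟨c, hcw, rfl⟩
    · rintro (⟨w', hw', _⟩ | ⟨c', h', hx⟩)
      · exact absurd hw' (by simp)
      · simp only [Sum.inr.injEq, Subtype.mk.injEq, Prod.mk.injEq] at hx
        exact Or.inr hx.2.symm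


end Aux2


lemma one_le_edist_of_ne {W : Type*} (H : SimpleGraph W) (u v : W) (h : u ≠ v) :
    1 ≤ H.edist u v :=
  ENat.one_le_iff_ne_zero.mpr (fun h0 => h (edist_eq_zero_iff.mp h0))

section Aux1b
variable [Fintype V] [DecidableEq V] {G : SimpleGraph V} {C : Finset V}
  {γ : V → V → V → ℕ∞} {β : V → V → ℕ∞}

lemma corrPathNU_shift {s t : V} {ℓ : ℕ} {v : ℕ → V}
    (h : IsCorrPathNU G C γ s t (ℓ+1) v) :
    IsCorrPathNU G C γ (v 1) t ℓ (fun n => v (n+1)) := by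
  obtain ⟨h0, hl, hadj, hfwd⟩ := h
  exact ⟨rfl, hl, fun i hi => hadj (i+1) (by omega), fun i hi hC => hfwd (i+1) (by omega) hC⟩

lemma corrPathNU_nil (t : V) : IsCorrPathNU G C γ t t 0 (fun _ => t) :=
  ⟨rfl, rfl, fun i hi => by omega, fun i hi _ => by omega⟩

lemma captured_iff_NU {s t : V} :
    Captured G C β s t ↔ CapturedNU G C (fun k _ j => β k j) s t := by
  unfold Captured CapturedNU
  refine forall_congr' fun ℓ => forall_congr' fun v => imp_congr ?_ Iff.rfl
  exact isCorrPath_iff_NU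

lemma admissible_iff_NU :
    Admissible G C β ↔ AdmissibleNU G C (fun k _ j => β k j) := by
  unfold Admissible AdmissibleNU
  refine forall_congr' fun s => forall_congr' fun t => imp_congr Iff.rfl ?_
  refine exists_congr fun ℓ => exists_congr fun v => ?_
  exact isCorrPath_iff_NU

lemma numCaptured_eq_NU :
    numCaptured G C β = numCapturedNU G C (fun k _ j => β k j) := by
  unfold numCaptured numCapturedNU
  congr 1
  ext p
  simp only [Set.mem_setOf_eq]
  exact and_congr Iff.rfl captured_iff_NU

end Aux1b

section Aux3
variable [Fintype V] [DecidableEq V] {G : SimpleGraph V} [DecidableRel G.Adj] {C : Finset V}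
  {γ : V → V → V → ℕ∞} {β : SubdivVert G C → SubdivVert G C → ℕ∞}

lemma card_le_card_subdiv : Fintype.card V ≤ Fintype.card (SubdivVert G C) := by
  rw [Fintype.card_sum]
  exact Nat.le_add_right _ _

lemma pNU_subdiv
    (Hm : ∀ (c u : V) (h : c ∈ C ∧ G.Adj c u) (j : V), j ∉ C →
      β (Sum.inr ⟨(c,u),h⟩) (Sum.inl j) = γ c u j)
    (j : V) (hj : j ∉ C) :
    ∀ (s : ℕ) (i : V), i ∉ C →
    perceivedNU (subdivGraph G C) (subdivColluders G C) (fun k _ y => β k y) s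
        (Sum.inl i) (Sum.inl j)
      = perceivedNU G C γ s i j := by
  intro s
  induction s with
  | zero =>
    intro i hi
    simp [perceivedNU, Sum.inl.injEq]
  | succ s ih =>
    intro i hi
    rw [pNU_succ, pNU_succ, ih i hi]
    congr 1
    congr 1
    refine le_antisymm (le_iInf₂ fun k hk => ?_) (le_iInf₂ fun x hx => ?_)
    · have hik : G.Adj i k := hk
      by_cases hkC : k ∈ C
      · have hadj' : (subdivGraph G C).Adj (Sum.inl i) (Sum.inr ⟨(k,i), ⟨hkC, hik.symm⟩⟩) :=
          Or.inr rfl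
        refine (iInf₂_le _ hadj').trans ?_
        rw [if_pos (mem_C'_inr _), Hm k i ⟨hkC, hik.symm⟩ j hj, if_pos hkC]
      · have hadj' : (subdivGraph G C).Adj (Sum.inl i) (Sum.inl k) := ⟨hik, hi, hkC⟩
        refine (iInf₂_le _ hadj').trans ?_
        rw [if_neg (fun hc => hkC (mem_C'_inl.mp hc)), ih k hkC,
          if_neg hkC]
    · rcases (adj_inl_honest hi x).mp hx with ⟨w, rfl, haw, hwC⟩ | ⟨c, h, rfl⟩
      · refine (iInf₂_le w haw).trans ?_
        rw [if_neg hwC, if_neg (fun hc => hwC (mem_C'_inl.mp hc)), ih w hwC]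
      · have hic : G.Adj i c := h.2.symm
        refine (iInf₂_le c hic).trans ?_
        rw [if_pos h.1, if_pos (mem_C'_inr _), Hm c i h j hj]

lemma rho_subdiv
    (Hm : ∀ (c u : V) (h : c ∈ C ∧ G.Adj c u) (j : V), j ∉ C →
      β (Sum.inr ⟨(c,u),h⟩) (Sum.inl j) = γ c u j)
    {i j : V} (hi : i ∉ C) (hj : j ∉ C) :
    rhoNU (subdivGraph G C) (subdivColluders G C) (fun k _ y => β k y)
        (Sum.inl i) (Sum.inl j)
      = rhoNU G C γ i j := by
  unfold rhoNU
  rw [pNU_subdiv Hm j hj _ i hi]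
  exact pNU_stab card_le_card_subdiv i j

lemma fwd_subdiv_inl
    (Hm : ∀ (c u : V) (h : c ∈ C ∧ G.Adj c u) (j : V), j ∉ C →
      β (Sum.inr ⟨(c,u),h⟩) (Sum.inl j) = γ c u j)
    {i j k : V} (hi : i ∉ C) (hj : j ∉ C) (hk : k ∉ C) :
    inForwardSetNU (subdivGraph G C) (subdivColluders G C) (fun a _ y => β a y)
        (Sum.inl i) (Sum.inl j) (Sum.inl k)
      ↔ inForwardSetNU G C γ i j k := by
  have hval : ∀ x, (subdivGraph G C).Adj (Sum.inl i) x →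
      ∃ k', G.Adj i k' ∧
        (if x ∈ subdivColluders G C then β x (Sum.inl j)
          else rhoNU (subdivGraph G C) (subdivColluders G C) (fun a _ y => β a y) x (Sum.inl j))
          = (if k' ∈ C then γ k' i j else rhoNU G C γ k' j) := by
    intro x hx
    rcases (adj_inl_honest hi x).mp hx with ⟨w, rfl, haw, hwC⟩ | ⟨c, h, rfl⟩
    · exact ⟨w, haw, by
        rw [if_neg (fun hc => hwC (mem_C'_inl.mp hc)), if_neg hwC, rho_subdiv Hm hwC hj]⟩
    · exact ⟨c, h.2.symm, by rw [if_pos (mem_C'_inr _), if_pos h.1, Hm c i h j hj]⟩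
  have hval' : ∀ k', G.Adj i k' →
      ∃ x, (subdivGraph G C).Adj (Sum.inl i) x ∧
        (if x ∈ subdivColluders G C then β x (Sum.inl j)
          else rhoNU (subdivGraph G C) (subdivColluders G C) (fun a _ y => β a y) x (Sum.inl j))
          = (if k' ∈ C then γ k' i j else rhoNU G C γ k' j) := by
    intro k' hk'
    by_cases hkC : k' ∈ C
    · refine ⟨Sum.inr ⟨(k', i), ⟨hkC, hk'.symm⟩⟩, Or.inr rfl, ?_⟩
      rw [if_pos (mem_C'_inr _), Hm k' i ⟨hkC, hk'.symm⟩ j hj, if_pos hkC]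
    · refine ⟨Sum.inl k', ⟨hk', hi, hkC⟩, ?_⟩
      rw [if_neg (fun hc => hkC (mem_C'_inl.mp hc)), if_neg hkC, rho_subdiv Hm hkC hj]
  have hvk : (if (Sum.inl k : SubdivVert G C) ∈ subdivColluders G C then β (Sum.inl k) (Sum.inl j)
        else rhoNU (subdivGraph G C) (subdivColluders G C) (fun a _ y => β a y)
          (Sum.inl k) (Sum.inl j))
      = (if k ∈ C then γ k i j else rhoNU G C γ k j) := by
    rw [if_neg (fun hc => hk (mem_C'_inl.mp hc)), if_neg hk, rho_subdiv Hm hk hj]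
  constructor
  · rintro ⟨hne, hadj, hmin⟩
    refine ⟨fun he => hne (by rw [he]), (adj_inl_inl.mp hadj).1, fun k' hk' => ?_⟩
    obtain ⟨x, hx, hvx⟩ := hval' k' hk'
    have := hmin x hx
    rw [hvk, hvx] at this
    exact this
  · rintro ⟨hne, hadj, hmin⟩
    refine ⟨fun he => hne (Sum.inl_injective he), ⟨hadj, hi, hk⟩, fun x hx => ?_⟩
    obtain ⟨k', hk', hvx⟩ := hval x hx
    rw [hvk, hvx]
    exact hmin k' hk'

lemma fwd_subdiv_inr
    (Hm : ∀ (c u : V) (h : c ∈ C ∧ G.Adj c u) (j : V), j ∉ C →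
      β (Sum.inr ⟨(c,u),h⟩) (Sum.inl j) = γ c u j)
    {i j : V} (hi : i ∉ C) (hj : j ∉ C) (c : V) (h : c ∈ C ∧ G.Adj c i) :
    inForwardSetNU (subdivGraph G C) (subdivColluders G C) (fun a _ y => β a y)
        (Sum.inl i) (Sum.inl j) (Sum.inr ⟨(c,i),h⟩)
      ↔ inForwardSetNU G C γ i j c := by
  have hval : ∀ x, (subdivGraph G C).Adj (Sum.inl i) x →
      ∃ k', G.Adj i k' ∧
        (if x ∈ subdivColluders G C then β x (Sum.inl j)
          else rhoNU (subdivGraph G C) (subdivColluders G C) (fun a _ y => β a y) x (Sum.inl j))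
          = (if k' ∈ C then γ k' i j else rhoNU G C γ k' j) := by
    intro x hx
    rcases (adj_inl_honest hi x).mp hx with ⟨w, rfl, haw, hwC⟩ | ⟨c', h', rfl⟩
    · exact ⟨w, haw, by
        rw [if_neg (fun hc => hwC (mem_C'_inl.mp hc)), if_neg hwC, rho_subdiv Hm hwC hj]⟩
    · exact ⟨c', h'.2.symm, by rw [if_pos (mem_C'_inr _), if_pos h'.1, Hm c' i h' j hj]⟩
  have hval' : ∀ k', G.Adj i k' →
      ∃ x, (subdivGraph G C).Adj (Sum.inl i) x ∧
        (if x ∈ subdivColluders G C then β x (Sum.inl j)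
          else rhoNU (subdivGraph G C) (subdivColluders G C) (fun a _ y => β a y) x (Sum.inl j))
          = (if k' ∈ C then γ k' i j else rhoNU G C γ k' j) := by
    intro k' hk'
    by_cases hkC : k' ∈ C
    · refine ⟨Sum.inr ⟨(k', i), ⟨hkC, hk'.symm⟩⟩, Or.inr rfl, ?_⟩
      rw [if_pos (mem_C'_inr _), Hm k' i ⟨hkC, hk'.symm⟩ j hj, if_pos hkC]
    · refine ⟨Sum.inl k', ⟨hk', hi, hkC⟩, ?_⟩
      rw [if_neg (fun hc => hkC (mem_C'_inl.mp hc)), if_neg hkC, rho_subdiv Hm hkC hj]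
  have hvc : (if (Sum.inr ⟨(c,i),h⟩ : SubdivVert G C) ∈ subdivColluders G C
        then β (Sum.inr ⟨(c,i),h⟩) (Sum.inl j)
        else rhoNU (subdivGraph G C) (subdivColluders G C) (fun a _ y => β a y)
          (Sum.inr ⟨(c,i),h⟩) (Sum.inl j))
      = (if c ∈ C then γ c i j else rhoNU G C γ c j) := by
    rw [if_pos (mem_C'_inr _), Hm c i h j hj, if_pos h.1]
  constructor
  · rintro ⟨hne, hadj, hmin⟩
    refine ⟨fun he => hne (by rw [he]), h.2.symm, fun k' hk' => ?_⟩
    obtain ⟨x, hx, hvx⟩ := hval' k' hk'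
    have := hmin x hx
    rw [hvc, hvx] at this
    exact this
  · rintro ⟨hne, hadj, hmin⟩
    refine ⟨fun he => hne (Sum.inl_injective he), Or.inr rfl, fun x hx => ?_⟩
    obtain ⟨k', hk', hvx⟩ := hval x hx
    rw [hvc, hvx]
    exact hmin k' hk'

end Aux3


section Aux4
variable [Fintype V] [DecidableEq V] {G : SimpleGraph V} [DecidableRel G.Adj] {C : Finset V}
  {γ : V → V → V → ℕ∞} {β : SubdivVert G C → SubdivVert G C → ℕ∞}

lemma subdiv_path_of_path
    (Hm : ∀ (c u : V) (h : c ∈ C ∧ G.Adj c u) (j : V), j ∉ C →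
      β (Sum.inr ⟨(c,u),h⟩) (Sum.inl j) = γ c u j)
    (hsep : ∀ x ∈ C, ∀ y ∈ C, ¬ G.Adj x y) {t : V} (ht : t ∉ C) :
    ∀ (ℓ : ℕ) (v : ℕ → V) (s : V), IsCorrPathNU G C γ s t ℓ v →
      ∃ ℓ' v', IsCorrPathNU (subdivGraph G C) (subdivColluders G C) (fun k _ y => β k y)
        (Sum.inl s) (Sum.inl t) ℓ' v' := by
  intro ℓ
  induction ℓ with
  | zero =>
    intro v s h
    have hst : s = t := h.1.symm.trans h.2.1
    subst hst
    exact ⟨0, fun _ => Sum.inl s, corrPathNU_nil _⟩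
  | succ ℓ ih =>
    intro v s h
    obtain ⟨h0, hl, hadj, hfwd⟩ := h
    have hsh := corrPathNU_shift ⟨h0, hl, hadj, hfwd⟩
    obtain ⟨ℓ', v', hp'⟩ := ih _ (v 1) hsh
    have hadj0 : G.Adj (v 0) (v 1) := hadj 0 (by omega)
    rw [← h0]
    by_cases h0C : v 0 ∈ C
    · have h1C : v 1 ∉ C := fun h1C => hsep _ h0C _ h1C hadj0
      have ha2 : (subdivGraph G C).Adj
          (Sum.inr ⟨(v 0, v 1), ⟨h0C, hadj0⟩⟩) (Sum.inl (v 1)) := Or.inr rfl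
      have step2 := corrPathNU_cons hp' ha2 (fun hc => absurd (mem_C'_inr _) hc)
      have ha1 : (subdivGraph G C).Adj (Sum.inl (v 0))
          (Sum.inr ⟨(v 0, v 1), ⟨h0C, hadj0⟩⟩) := Or.inl rfl
      have step1 := corrPathNU_cons step2 ha1 (fun hc => absurd (mem_C'_inl.mpr h0C) hc)
      exact ⟨_, _, step1⟩
    · by_cases h1C : v 1 ∈ C
      · have ha2 : (subdivGraph G C).Adj
            (Sum.inr ⟨(v 1, v 0), ⟨h1C, hadj0.symm⟩⟩) (Sum.inl (v 1)) := Or.inl rfl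
        have step2 := corrPathNU_cons hp' ha2 (fun hc => absurd (mem_C'_inr _) hc)
        have ha1 : (subdivGraph G C).Adj (Sum.inl (v 0))
            (Sum.inr ⟨(v 1, v 0), ⟨h1C, hadj0.symm⟩⟩) := Or.inr rfl
        have step1 := corrPathNU_cons step2 ha1
          (fun _ => (fwd_subdiv_inr Hm h0C ht (v 1) ⟨h1C, hadj0.symm⟩).mpr
            (hfwd 0 (by omega) h0C))
        exact ⟨_, _, step1⟩
      · have ha1 : (subdivGraph G C).Adj (Sum.inl (v 0)) (Sum.inl (v 1)) := ⟨hadj0, h0C, h1C⟩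
        have step1 := corrPathNU_cons hp' ha1
          (fun _ => (fwd_subdiv_inl Hm h0C ht h1C).mpr (hfwd 0 (by omega) h0C))
        exact ⟨_, _, step1⟩

lemma path_of_subdiv_path
    (Hm : ∀ (c u : V) (h : c ∈ C ∧ G.Adj c u) (j : V), j ∉ C →
      β (Sum.inr ⟨(c,u),h⟩) (Sum.inl j) = γ c u j)
    (hsep : ∀ x ∈ C, ∀ y ∈ C, ¬ G.Adj x y) {t : V} (ht : t ∉ C) :
    ∀ (n : ℕ) (v : ℕ → SubdivVert G C) (s : V),
      IsCorrPathNU (subdivGraph G C) (subdivColluders G C) (fun k _ y => β k y)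
        (Sum.inl s) (Sum.inl t) n v →
      ∃ ℓ w, IsCorrPathNU G C γ s t ℓ w := by
  intro n
  induction n using Nat.strong_induction_on with
  | _ n ihn =>
    intro v s hp
    obtain ⟨h0, hl, hadj, hfwd⟩ := hp
    cases n with
    | zero =>
      have : s = t := Sum.inl_injective (h0.symm.trans hl)
      subst this
      exact ⟨0, fun _ => s, corrPathNU_nil _⟩
    | succ n =>
      cases hv1 : v 1 with
      | inl w =>
        have hadj0 : (subdivGraph G C).Adj (Sum.inl s) (Sum.inl w) := by
          have := hadj 0 (by omega)
          rwa [h0, hv1] at this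
        obtain ⟨hsw, hsC, hwC⟩ := adj_inl_inl.mp hadj0
        have hsh := corrPathNU_shift ⟨h0, hl, hadj, hfwd⟩
        rw [hv1] at hsh
        obtain ⟨ℓ, w', hw'⟩ := ihn n (by omega) _ w hsh
        refine ⟨ℓ+1, consF s w', corrPathNU_cons hw' hsw (fun hs => ?_)⟩
        have hf := hfwd 0 (by omega) (by
          rw [h0]; exact fun hc => hs (mem_C'_inl.mp hc))
        rw [h0, hv1] at hf
        exact (fwd_subdiv_inl Hm hs ht hwC).mp hf
      | inr e =>
        obtain ⟨⟨c, u⟩, hcu⟩ := e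
        have hn1 : 1 ≤ n := by
          rcases Nat.eq_zero_or_pos n with rfl | h
          · rw [hv1] at hl; exact absurd hl (by simp)
          · exact h
        have hadj12 : (subdivGraph G C).Adj (v 1) (v 2) := hadj 1 (by omega)
        rw [hv1] at hadj12
        cases hv2 : v 2 with
        | inr f => rw [hv2] at hadj12; exact absurd hadj12 not_adj_inr_inr
        | inl z =>
          rw [hv2] at hadj12
          have hz : z = c ∨ z = u := adj_inr_inl.mp hadj12
          obtain ⟨n', rfl⟩ : ∃ n', n = n' + 1 := ⟨n - 1, by omega⟩
          obtain ⟨ℓ, w', hw'⟩ := ihn n' (by omega) (fun m => v (m+2)) z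
            ⟨hv2, hl, fun i hi => hadj (i+2) (by omega), fun i hi hC => hfwd (i+2) (by omega) hC⟩
          by_cases hzs : z = s
          · subst hzs
            exact ⟨ℓ, w', hw'⟩
          · have hadj01 : (subdivGraph G C).Adj (Sum.inl s) (Sum.inr ⟨(c,u),hcu⟩) := by
              have := hadj 0 (by omega)
              rwa [h0, hv1] at this
            have hsu : s = c ∨ s = u := adj_inl_inr.mp hadj01
            have hadjsz : G.Adj s z := by
              rcases hsu with rfl | rfl <;> rcases hz with rfl | rfl
              · exact absurd rfl hzs
              · exact hcu.2
              · exact hcu.2.symm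
              · exact absurd rfl hzs
            refine ⟨ℓ+1, consF s w', corrPathNU_cons hw' hadjsz (fun hsC => ?_)⟩
            have hsu' : s = u := by
              rcases hsu with rfl | rfl
              · exact absurd hcu.1 hsC
              · rfl
            subst hsu'
            have hzc : z = c := by
              rcases hz with rfl | rfl
              · rfl
              · exact absurd rfl hzs
            subst hzc
            have hf := hfwd 0 (by omega) (by
              rw [h0]; exact fun hc => hsC (mem_C'_inl.mp hc))
            rw [h0, hv1] at hf
            exact (fwd_subdiv_inr Hm hsC ht z hcu).mp hf

lemma free_path_subdiv
    (Hm : ∀ (c u : V) (h : c ∈ C ∧ G.Adj c u) (j : V), j ∉ C →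
      β (Sum.inr ⟨(c,u),h⟩) (Sum.inl j) = γ c u j)
    {t : V} (ht : t ∉ C) {ℓ : ℕ} {v : ℕ → V} {s : V}
    (h : IsCorrPathNU G C γ s t ℓ v) (hfree : ∀ i ≤ ℓ, v i ∉ C) :
    IsCorrPathNU (subdivGraph G C) (subdivColluders G C) (fun k _ y => β k y)
      (Sum.inl s) (Sum.inl t) ℓ (fun n => Sum.inl (v n)) := by
  obtain ⟨h0, hl, hadj, hfwd⟩ := h
  refine ⟨show Sum.inl (v 0) = _ by rw [h0], show Sum.inl (v ℓ) = _ by rw [hl],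
    fun i hi => ?_, fun i hi _ => ?_⟩
  · exact ⟨hadj i hi, hfree i (le_of_lt hi), hfree (i+1) hi⟩
  · exact (fwd_subdiv_inl Hm (hfree i hi.le) ht (hfree (i+1) hi)).mpr
      (hfwd i hi (hfree i hi.le))

lemma free_path_unsubdiv
    (Hm : ∀ (c u : V) (h : c ∈ C ∧ G.Adj c u) (j : V), j ∉ C →
      β (Sum.inr ⟨(c,u),h⟩) (Sum.inl j) = γ c u j)
    {t : V} (ht : t ∉ C) {ℓ : ℕ} {v : ℕ → SubdivVert G C} {s : V}
    (h : IsCorrPathNU (subdivGraph G C) (subdivColluders G C) (fun k _ y => β k y)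
      (Sum.inl s) (Sum.inl t) ℓ v)
    (hfree : ∀ i ≤ ℓ, v i ∉ subdivColluders G C) :
    ∃ w, IsCorrPathNU G C γ s t ℓ w ∧ ∀ i ≤ ℓ, w i ∉ C := by
  obtain ⟨h0, hl, hadj, hfwd⟩ := h
  set w : ℕ → V := fun n => Sum.elim id (fun _ => s) (v n) with hw
  have hrep : ∀ i ≤ ℓ, v i = Sum.inl (w i) ∧ w i ∉ C := by
    intro i hi
    cases hvi : v i with
    | inl a =>
      refine ⟨by simp [hw, hvi], ?_⟩
      have : v i ∉ subdivColluders G C := hfree i hi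
      rw [hvi] at this
      simpa [hw, hvi] using fun hc => this (mem_C'_inl.mpr hc)
    | inr e => exact absurd (by rw [hvi]; exact mem_C'_inr e) (hfree i hi)
  have hwadj : ∀ i < ℓ, G.Adj (w i) (w (i+1)) := by
    intro i hi
    have := hadj i hi
    rw [(hrep i hi.le).1, (hrep (i+1) hi).1] at this
    exact (adj_inl_inl.mp this).1
  refine ⟨w, ⟨?_, ?_, hwadj, fun i hi hC => ?_⟩, fun i hi => (hrep i hi).2⟩
  · have := (hrep 0 (Nat.zero_le _)).1
    rw [h0] at this
    exact (Sum.inl_injective this.symm)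
  · have := (hrep ℓ le_rfl).1
    rw [hl] at this
    exact (Sum.inl_injective this.symm)
  · have hf := hfwd i hi (by rw [(hrep i hi.le).1]; exact fun hc => hC (mem_C'_inl.mp hc))
    rw [(hrep i hi.le).1, (hrep (i+1) hi).1] at hf
    exact (fwd_subdiv_inl Hm (hrep i hi.le).2 ht (hrep (i+1) hi).2).mp hf

lemma captured_iff_subdiv
    (Hm : ∀ (c u : V) (h : c ∈ C ∧ G.Adj c u) (j : V), j ∉ C →
      β (Sum.inr ⟨(c,u),h⟩) (Sum.inl j) = γ c u j)
    {a b : V} :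
    CapturedNU (subdivGraph G C) (subdivColluders G C) (fun k _ y => β k y)
        (Sum.inl a) (Sum.inl b)
      ↔ CapturedNU G C γ a b := by
  by_cases hb : b ∈ C
  · refine iff_of_true (fun ℓ v h => ⟨ℓ, le_rfl, ?_⟩) (fun ℓ v h => ⟨ℓ, le_rfl, ?_⟩)
    · rw [h.2.1]; exact mem_C'_inl.mpr hb
    · rw [h.2.1]; exact hb
  · by_cases ha : a ∈ C
    · refine iff_of_true (fun ℓ v h => ⟨0, Nat.zero_le _, ?_⟩) (fun ℓ v h => ⟨0, Nat.zero_le _, ?_⟩)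
      · rw [h.1]; exact mem_C'_inl.mpr ha
      · rw [h.1]; exact ha
    · constructor
      · intro hcap ℓ v hp
        by_contra hfree
        push_neg at hfree
        obtain ⟨i, hi, hmem⟩ := hcap ℓ _ (free_path_subdiv Hm hb hp hfree)
        exact hfree i hi (mem_C'_inl.mp hmem)
      · intro hcap ℓ v hp
        by_contra hfree
        push_neg at hfree
        obtain ⟨w, hwp, hwfree⟩ := free_path_unsubdiv Hm hb hp hfree
        obtain ⟨i, hi, hmem⟩ := hcap ℓ w hwp
        exact hwfree i hi hmem

end Aux4


section Aux5
variable [Fintype V] [DecidableEq V] {G : SimpleGraph V} [DecidableRel G.Adj] {C : Finset V}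
  {γ : V → V → V → ℕ∞} {β : SubdivVert G C → SubdivVert G C → ℕ∞}

lemma card_newVerts {D : ℕ} (hreg : ∀ v : V, G.degree v = D) :
    Fintype.card {p : V × V // p.1 ∈ C ∧ G.Adj p.1 p.2} = C.card * D := by
  have e : {p : V × V // p.1 ∈ C ∧ G.Adj p.1 p.2} ≃
      Σ c : {x : V // x ∈ C}, {u : V // G.Adj c.1 u} :=
    { toFun := fun p => ⟨⟨p.1.1, p.2.1⟩, ⟨p.1.2, p.2.2⟩⟩
      invFun := fun q => ⟨(q.1.1, q.2.1), ⟨q.1.2, q.2.2⟩⟩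
      left_inv := by rintro ⟨⟨a, b⟩, h⟩; rfl
      right_inv := by rintro ⟨⟨c, hc⟩, ⟨u, hu⟩⟩; rfl }
  rw [Fintype.card_congr e, Fintype.card_sigma]
  have hval : ∀ c : {x : V // x ∈ C}, Fintype.card {u : V // G.Adj c.1 u} = D := by
    intro c
    rw [← hreg c.1, ← card_neighborSet_eq_degree]
    apply Fintype.card_congr
    exact Equiv.subtypeEquivRight (by intro u; simp [mem_neighborSet])
  simp only [hval]
  rw [Finset.sum_const, Finset.card_univ, Fintype.card_coe, smul_eq_mul]

lemma offDiag_ncard (α : Type*) [Fintype α] [DecidableEq α] :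
    {p : α × α | p.1 ≠ p.2}.ncard = Fintype.card α * Fintype.card α - Fintype.card α := by
  rw [show {p : α × α | p.1 ≠ p.2} = ↑((Finset.univ : Finset α).offDiag) by
    ext p; simp [Finset.mem_offDiag]]
  rw [Set.ncard_coe_finset, Finset.offDiag_card]
  simp [Finset.card_univ]

lemma count_key
    (Hm : ∀ (c u : V) (h : c ∈ C ∧ G.Adj c u) (j : V), j ∉ C →
      β (Sum.inr ⟨(c,u),h⟩) (Sum.inl j) = γ c u j) :
    numCapturedNU (subdivGraph G C) (subdivColluders G C) (fun k _ y => β k y)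
      = numCapturedNU G C γ
        + ((Fintype.card (SubdivVert G C) * Fintype.card (SubdivVert G C)
            - Fintype.card (SubdivVert G C))
          - (Fintype.card V * Fintype.card V - Fintype.card V)) := by
  classical
  set A : Set (V × V) := {p | p.1 ≠ p.2 ∧ CapturedNU G C γ p.1 p.2} with hA
  set Bs : Set (SubdivVert G C × SubdivVert G C) :=
    {p | p.1 ≠ p.2 ∧ CapturedNU (subdivGraph G C) (subdivColluders G C)
      (fun k _ y => β k y) p.1 p.2} with hB
  set f : V × V → SubdivVert G C × SubdivVert G C :=
    fun p => (Sum.inl p.1, Sum.inl p.2) with hf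
  have hfinj : Function.Injective f := by
    intro p q h
    simp only [hf, Prod.ext_iff, Sum.inl.injEq] at h
    exact Prod.ext_iff.mpr h
  set D2 : Set (SubdivVert G C × SubdivVert G C) :=
    {p | p.1 ≠ p.2 ∧ ∀ a b : V, p ≠ (Sum.inl a, Sum.inl b)} with hD2
  have hsplit : Bs = (f '' A) ∪ D2 := by
    ext ⟨x, y⟩
    simp only [hB, hD2, hA, hf, Set.mem_union, Set.mem_image, Set.mem_setOf_eq]
    cases x with
    | inl a =>
      cases y with
      | inl b =>
        constructor
        · rintro ⟨hne, hcap⟩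
          exact Or.inl ⟨(a, b), ⟨fun h => hne (congrArg Sum.inl h),
            (captured_iff_subdiv Hm).mp hcap⟩, rfl⟩
        · rintro (⟨⟨a', b'⟩, ⟨hne, hcap⟩, heq⟩ | ⟨hne, hall⟩)
          · simp only [Prod.mk.injEq, Sum.inl.injEq] at heq
            obtain ⟨rfl, rfl⟩ := heq
            exact ⟨fun h => hne (Sum.inl_injective h), (captured_iff_subdiv Hm).mpr hcap⟩
          · exact absurd rfl (hall a b)
      | inr e =>
        constructor
        · rintro ⟨hne, _⟩
          exact Or.inr ⟨hne, fun a b h => by simp at h⟩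
        · rintro (⟨q, _, heq⟩ | ⟨hne, _⟩)
          · exact absurd heq (by simp)
          · refine ⟨hne, fun ℓ v hp => ⟨ℓ, le_rfl, ?_⟩⟩
            rw [hp.2.1]
            exact mem_C'_inr e
    | inr e =>
      constructor
      · rintro ⟨hne, _⟩
        exact Or.inr ⟨hne, fun a b h => by simp at h⟩
      · rintro (⟨q, _, heq⟩ | ⟨hne, _⟩)
        · exact absurd heq (by simp)
        · refine ⟨hne, fun ℓ v hp => ⟨0, Nat.zero_le _, ?_⟩⟩
          rw [hp.1]
          exact mem_C'_inr e
  have hdisj : Disjoint (f '' A) D2 := by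
    rw [Set.disjoint_left]
    rintro p ⟨q, _, rfl⟩ ⟨_, hall⟩
    exact hall q.1 q.2 rfl
  have hD2card : D2.ncard = (Fintype.card (SubdivVert G C) * Fintype.card (SubdivVert G C)
      - Fintype.card (SubdivVert G C))
      - (Fintype.card V * Fintype.card V - Fintype.card V) := by
    have hT : D2 = {p : SubdivVert G C × SubdivVert G C | p.1 ≠ p.2}
        \ (f '' {p : V × V | p.1 ≠ p.2}) := by
      ext ⟨x, y⟩
      simp only [hD2, hf, Set.mem_diff, Set.mem_setOf_eq, Set.mem_image]
      constructor
      · rintro ⟨hne, hall⟩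
        refine ⟨hne, ?_⟩
        rintro ⟨q, _, heq⟩
        exact hall q.1 q.2 heq.symm
      · rintro ⟨hne, hnim⟩
        refine ⟨hne, fun a b heq => hnim ⟨(a, b), ?_, heq.symm⟩⟩
        simp only [Prod.mk.injEq] at heq
        intro hab
        apply hne
        show x = y
        rw [heq.1, heq.2]
        exact congrArg Sum.inl hab
    have hsub : f '' {p : V × V | p.1 ≠ p.2} ⊆
        {p : SubdivVert G C × SubdivVert G C | p.1 ≠ p.2} := by
      rintro p ⟨q, hq, rfl⟩
      exact fun h => hq (Sum.inl_injective h)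
    rw [hT, Set.ncard_diff hsub, Set.ncard_image_of_injective _ hfinj,
      offDiag_ncard, offDiag_ncard]
  have : Bs.ncard = A.ncard + D2.ncard := by
    rw [hsplit, Set.ncard_union_eq hdisj, Set.ncard_image_of_injective _ hfinj]
  calc numCapturedNU (subdivGraph G C) (subdivColluders G C) (fun k _ y => β k y)
      = Bs.ncard := rfl
    _ = A.ncard + D2.ncard := this
    _ = _ := by rw [hD2card]; rfl

end Aux5


/-- For a finite connected `D`-regular graph `G` and an independent
set `C` of colluders, nonuniform monitoring on `(G, C)` reduces to uniform monitoring
on the subdivided graph `(G', C')`: for every `m`, there is an admissible nonuniform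
broadcast `γ` for `(G,C)` capturing at least `m` ordered pairs iff there is an
admissible uniform broadcast `β` for `(G',C')` capturing at least
`m + |C|·D·(|C|·D - 1) + 2·|C|·D·|V|` ordered pairs. -/
theorem nonuniform_reduces_to_uniform [Fintype V] [DecidableEq V]
    (G : SimpleGraph V) [DecidableRel G.Adj]
    (hG : G.Connected) (hn : 2 ≤ Fintype.card V)
    (D : ℕ) (hD : 1 ≤ D) (hreg : ∀ v : V, G.degree v = D)
    (C : Finset V) (hsep : ∀ x ∈ C, ∀ y ∈ C, ¬ G.Adj x y)
    (m : ℕ) :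
    (∃ γ : V → V → V → ℕ∞,
        (∀ c ∈ C, ∀ u : V, G.Adj c u → γ c u c = 0) ∧
        (∀ c ∈ C, ∀ u : V, G.Adj c u → ∀ j : V, j ≠ c → 1 ≤ γ c u j) ∧
        AdmissibleNU G C γ ∧ m ≤ numCapturedNU G C γ) ↔
      (∃ β : SubdivVert G C → SubdivVert G C → ℕ∞,
        (∀ c ∈ subdivColluders G C, β c c = 0) ∧
        (∀ c ∈ subdivColluders G C, ∀ t : SubdivVert G C, t ≠ c → 1 ≤ β c t) ∧
        Admissible (subdivGraph G C) (subdivColluders G C) β ∧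
        m + C.card * D * (C.card * D - 1) + 2 * (C.card * D) * Fintype.card V ≤
          numCaptured (subdivGraph G C) (subdivColluders G C) β) := by
  classical
  have hNe : Nonempty V := Fintype.card_pos_iff.mp (by omega)
  have hMv : Fintype.card {p : V × V // p.1 ∈ C ∧ G.Adj p.1 p.2} = C.card * D :=
    card_newVerts hreg
  have hV' : Fintype.card (SubdivVert G C) = Fintype.card V + C.card * D := by
    rw [Fintype.card_sum, hMv]
  have hconn' : (subdivGraph G C).Connected := subdiv_connected hsep hG
  have hK : (Fintype.card (SubdivVert G C) * Fintype.card (SubdivVert G C)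
      - Fintype.card (SubdivVert G C))
      - (Fintype.card V * Fintype.card V - Fintype.card V)
      = C.card * D * (C.card * D - 1) + 2 * (C.card * D) * Fintype.card V := by
    rw [hV']
    have h1 : (Fintype.card V + C.card * D) * (Fintype.card V + C.card * D)
        = Fintype.card V * Fintype.card V
          + (2 * (C.card * D) * Fintype.card V + C.card * D * (C.card * D)) := by ring
    have h2 : Fintype.card V ≤ Fintype.card V * Fintype.card V :=
      Nat.le_mul_of_pos_left _ (by omega)
    have h3 : C.card * D ≤ C.card * D * (C.card * D) := by
      rcases Nat.eq_zero_or_pos (C.card * D) with h | h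
      · simp [h]
      · exact Nat.le_mul_of_pos_left _ h
    have h4 : C.card * D * (C.card * D - 1)
        = C.card * D * (C.card * D) - C.card * D := by
      rcases Nat.eq_zero_or_pos (C.card * D) with h | h
      · simp [h]
      · obtain ⟨M', hM'⟩ : ∃ M', C.card * D = M' + 1 := ⟨C.card * D - 1, by omega⟩
        rw [hM']
        have he : (M' + 1) * (M' + 1) = (M' + 1) * M' + (M' + 1) := by ring
        rw [he]
        simp
    rw [h1, h4]
    generalize Fintype.card V * Fintype.card V = a at h2 ⊢
    generalize C.card * D * (C.card * D) = b at h3 ⊢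
    generalize 2 * (C.card * D) * Fintype.card V = d
    omega
  constructor
  · rintro ⟨γ, hγ0, hγ1, hγadm, hγcnt⟩
    set β : SubdivVert G C → SubdivVert G C → ℕ∞ := fun x y =>
      match x, y with
      | Sum.inr e, Sum.inl j =>
          if j ∈ C then (subdivGraph G C).edist (Sum.inr e) (Sum.inl j)
          else γ e.1.1 e.1.2 j
      | a, b => (subdivGraph G C).edist a b with hβdef
    have hβrr : ∀ (e : {p : V × V // p.1 ∈ C ∧ G.Adj p.1 p.2}) (j : V),
        β (Sum.inr e) (Sum.inl j) = if j ∈ C then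
          (subdivGraph G C).edist (Sum.inr e) (Sum.inl j) else γ e.1.1 e.1.2 j := fun _ _ => rfl
    have hβll : ∀ (a : V) (y : SubdivVert G C), β (Sum.inl a) y
        = (subdivGraph G C).edist (Sum.inl a) y := by
      intro a y; cases y <;> rfl
    have hβrr' : ∀ (e f : {p : V × V // p.1 ∈ C ∧ G.Adj p.1 p.2}),
        β (Sum.inr e) (Sum.inr f) = (subdivGraph G C).edist (Sum.inr e) (Sum.inr f) :=
      fun _ _ => rfl
    have Fm : ∀ (c u : V) (h : c ∈ C ∧ G.Adj c u) (j : V), j ∉ C →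
        β (Sum.inr ⟨(c,u),h⟩) (Sum.inl j) = γ c u j := by
      intro c u h j hj
      rw [hβrr, if_neg hj]
    refine ⟨β, ?_, ?_, ?_, ?_⟩
    · rintro (a | e) _
      · rw [hβll]; exact SimpleGraph.edist_self
      · rw [hβrr']; exact SimpleGraph.edist_self
    · rintro (a | e) _ (b | f) hne
      · rw [hβll]; exact one_le_edist_of_ne _ _ _ (Ne.symm hne)
      · rw [hβll]; exact one_le_edist_of_ne _ _ _ (Ne.symm hne)
      · rw [hβrr]
        by_cases hbC : b ∈ C
        · rw [if_pos hbC]; exact one_le_edist_of_ne _ _ _ (Ne.symm hne)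
        · rw [if_neg hbC]
          exact hγ1 e.1.1 e.2.1 e.1.2 e.2.2 b (fun h => hbC (h ▸ e.2.1))
      · rw [hβrr']; exact one_le_edist_of_ne _ _ _ (Ne.symm hne)
    · -- admissibility
      rw [admissible_iff_NU]
      intro x y hxy
      cases y with
      | inl j =>
        by_cases hjC : j ∈ C
        · have Htruth : ∀ c' ∈ subdivColluders G C, ∀ u',
              (subdivGraph G C).Adj c' u' →
              (fun k (_ y : SubdivVert G C) => β k y) c' u' (Sum.inl j)
                = (subdivGraph G C).edist c' (Sum.inl j) := by
            rintro (a | e) _ u' _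
            · exact hβll a _
            · rw [show (fun k (_ y : SubdivVert G C) => β k y) (Sum.inr e) u' (Sum.inl j)
                = β (Sum.inr e) (Sum.inl j) from rfl, hβrr, if_pos hjC]
          obtain ⟨n0, hn0⟩ : ∃ n0 : ℕ, (subdivGraph G C).edist x (Sum.inl j) = (n0 : ℕ∞) := by
            have hne_top : (subdivGraph G C).edist x (Sum.inl j) ≠ ⊤ :=
              edist_ne_top_iff_reachable.mpr (hconn' x (Sum.inl j))
            exact ⟨_, (ENat.coe_toNat hne_top).symm⟩
          exact truthful_route Htruth hconn' n0 x hxy hn0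
        · cases x with
          | inl s =>
            have hsj : s ≠ j := fun h => hxy (by rw [h])
            obtain ⟨ℓ, v, hp⟩ := hγadm s j hsj
            exact subdiv_path_of_path Fm hsep hjC ℓ v s hp
          | inr e =>
            obtain ⟨⟨c, u⟩, hcu⟩ := e
            by_cases huj : u = j
            · subst huj
              have ha : (subdivGraph G C).Adj (Sum.inr ⟨(c,u),hcu⟩) (Sum.inl u) :=
                Or.inr rfl
              exact ⟨1, _, corrPathNU_cons (corrPathNU_nil (Sum.inl u)) ha
                (fun hc => absurd (mem_C'_inr _) hc)⟩
            · obtain ⟨ℓ, v, hp⟩ := hγadm u j huj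
              obtain ⟨ℓ', v', hp'⟩ := subdiv_path_of_path Fm hsep hjC ℓ v u hp
              have ha : (subdivGraph G C).Adj (Sum.inr ⟨(c,u),hcu⟩) (Sum.inl u) :=
                Or.inr rfl
              exact ⟨ℓ'+1, _, corrPathNU_cons hp' ha
                (fun hc => absurd (mem_C'_inr _) hc)⟩
      | inr f =>
        have Htruth : ∀ c' ∈ subdivColluders G C, ∀ u',
            (subdivGraph G C).Adj c' u' →
            (fun k (_ y : SubdivVert G C) => β k y) c' u' (Sum.inr f)
              = (subdivGraph G C).edist c' (Sum.inr f) := by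
          rintro (a | e) _ u' _
          · exact hβll a _
          · exact hβrr' e f
        obtain ⟨n0, hn0⟩ : ∃ n0 : ℕ, (subdivGraph G C).edist x (Sum.inr f) = (n0 : ℕ∞) := by
          have hne_top : (subdivGraph G C).edist x (Sum.inr f) ≠ ⊤ :=
            edist_ne_top_iff_reachable.mpr (hconn' x (Sum.inr f))
          exact ⟨_, (ENat.coe_toNat hne_top).symm⟩
        exact truthful_route Htruth hconn' n0 x hxy hn0
    · -- counting
      rw [numCaptured_eq_NU, count_key Fm, hK]
      have hadd := Nat.add_le_add_right hγcnt
        (C.card * D * (C.card * D - 1) + 2 * (C.card * D) * Fintype.card V)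
      calc m + C.card * D * (C.card * D - 1) + 2 * (C.card * D) * Fintype.card V
          = m + (C.card * D * (C.card * D - 1) + 2 * (C.card * D) * Fintype.card V) := by
            rw [Nat.add_assoc]
        _ ≤ _ := hadd
  · rintro ⟨β, hβ0, hβ1, hβadm, hβcnt⟩
    set γ : V → V → V → ℕ∞ := fun c u j => if j = c then 0 else if j ∈ C then G.edist c j
      else (if h : c ∈ C ∧ G.Adj c u then β (Sum.inr ⟨(c,u),h⟩) (Sum.inl j) else 1)
      with hγdef
    have hγred : ∀ c u j, γ c u j = if j = c then 0 else if j ∈ C then G.edist c j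
        else (if h : c ∈ C ∧ G.Adj c u then β (Sum.inr ⟨(c,u),h⟩) (Sum.inl j) else 1) :=
      fun _ _ _ => rfl
    have Fm : ∀ (c u : V) (h : c ∈ C ∧ G.Adj c u) (j : V), j ∉ C →
        β (Sum.inr ⟨(c,u),h⟩) (Sum.inl j) = γ c u j := by
      intro c u h j hj
      rw [hγred, if_neg (fun hjc : j = c => hj (hjc ▸ h.1)), if_neg hj, dif_pos h]
    refine ⟨γ, ?_, ?_, ?_, ?_⟩
    · intro c _ u _
      rw [hγred, if_pos rfl]
    · intro c hc u hadj j hj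
      rw [hγred, if_neg hj]
      by_cases hjC : j ∈ C
      · rw [if_pos hjC]
        exact one_le_edist_of_ne _ _ _ (Ne.symm hj)
      · rw [if_neg hjC, dif_pos ⟨hc, hadj⟩]
        exact hβ1 _ (mem_C'_inr _) _ (by simp)
    · intro s t hst
      by_cases htC : t ∈ C
      · have Htruth : ∀ c ∈ C, ∀ u, G.Adj c u → γ c u t = G.edist c t := by
          intro c hc u hadj
          rw [hγred]
          by_cases htc : t = c
          · rw [if_pos htc, htc, SimpleGraph.edist_self]
          · rw [if_neg htc, if_pos htC]
        obtain ⟨n0, hn0⟩ : ∃ n0 : ℕ, G.edist s t = (n0 : ℕ∞) := by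
          have hne_top : G.edist s t ≠ ⊤ := edist_ne_top_iff_reachable.mpr (hG s t)
          exact ⟨_, (ENat.coe_toNat hne_top).symm⟩
        exact truthful_route Htruth hG n0 s hst hn0
      · obtain ⟨ℓ, v, hp⟩ := hβadm (Sum.inl s) (Sum.inl t) (by simpa using hst)
        exact path_of_subdiv_path Fm hsep htC ℓ v s (isCorrPath_iff_NU.mp hp)
    · have h1 := count_key Fm
      rw [← numCaptured_eq_NU, hK] at h1
      rw [h1, Nat.add_assoc] at hβcnt
      exact Nat.le_of_add_le_add_right hβcnt


end Intercept
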